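/- For a, b in (0,1], if x₀, x₁, ..., x_{n-1} is a periodic orbit of f = f_{a,b} (with x_i = f^i(x₀), f^n(x₀) = x₀, n ≥ 1) none of whose points equals 1/2, then the product of the one-sided derivatives ∏_{i=0}^{n-1} f'(x_i) is strictly greater than 1, i.e., the periodic orbit is repelling. -/

import Mathlib

noncomputable def fab (a b x : ℝ) : ℝ :=
  if x ≤ 1/2 then x * (1 + a - a * x) else x * (1 - b + b * x)

noncomputable def fab' (a b x : ℝ) : ℝ :=
  if x < 1/2 then 1 + a - 2 * a * x else 1 - b + 2 * b * x

theorem stmt11 (a b : ℝ) (ha : a ∈ Set.Ioc (0:ℝ) 1) (hb : b ∈ Set.Ioc (0:ℝ) 1)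
    (n : ℕ) (hn : 1 ≤ n) (x₀ : ℝ) (hx₀ : x₀ ∈ Set.Icc (0:ℝ) 1)
    (hper : (fab a b)^[n] x₀ = x₀)
    (hne : ∀ i < n, (fab a b)^[i] x₀ ≠ 1/2) :
    1 < ∏ i ∈ Finset.range n, fab' a b ((fab a b)^[i] x₀) := by
  have := Finset.prod_lt_prod_of_nonempty (f := fun _ : ℕ => (1:ℝ))
    (g := fun i => fab' a b ((fab a b)^[i] x₀)) (s := Finset.range n)
    (fun i _ => one_pos) ?_ (Finset.nonempty_range_iff.mpr (by omega))
  · simpa using this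
  · intro i hi
    rw [Finset.mem_range] at hi
    have hy := hne i hi
    set y := (fab a b)^[i] x₀ with hyd
    show (1:ℝ) < fab' a b y
    unfold fab'
    by_cases h : y < 1/2
    · rw [if_pos h]
      nlinarith [ha.1]
    · rw [if_neg h]
      have : (1:ℝ)/2 < y := lt_of_le_of_ne (not_lt.mp h) (Ne.symm hy)
      nlinarith [hb.1]
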